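/- arXiv:1805.09545 — 2 statements merged into one kernel-verified Lean document; each statement's English description precedes it below -/
import Mathlib

section
/- Let F : M(Ω) → ℝ ∪ {+∞} be defined by F(μ) = R(∫Φ dμ) + ∫V dμ where R is convex, Fréchet differentiable, and Φ : Ω → F is a map into a Hilbert space with ∫|Φ|d|μ| < ∞. Then a nonnegative measure μ with F(μ) < ∞ is a global minimizer of F over nonnegative measures if and only if the function F'(μ) : u ↦ ⟨R'(∫Φ dμ), Φ(u)⟩ + V(u) is nonnegative on Ω and vanishes μ-almost everywhere. -/
open MeasureTheory Topology Filter
open scoped ENNReal NNReal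
open scoped RealInnerProductSpace

/-- The one-sided difference quotients of `R` along direction `v` converge to
`⟪g, v⟫` when `R` has gradient `g` at `x`. -/
lemma slope_tendsto_inner {H : Type*} [NormedAddCommGroup H] [InnerProductSpace ℝ H]
    [CompleteSpace H] (R : H → ℝ) (g x v : H) (h : HasGradientAt R g x) :
    Tendsto (fun t : ℝ => (R (x + t • v) - R x) / t) (𝓝[>] (0:ℝ)) (𝓝 ⟪g, v⟫) := by
  have hc : HasDerivAt (fun t : ℝ => x + t • v) v 0 := by
    simpa using ((hasDerivAt_id (0:ℝ)).smul_const v).const_add x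
  have hf : HasFDerivAt R (InnerProductSpace.toDual ℝ H g) ((fun t : ℝ => x + t • v) 0) := by
    simpa using h.hasFDerivAt
  have hφ : HasDerivAt (fun t : ℝ => R (x + t • v)) ⟪g, v⟫ 0 := by
    simpa [InnerProductSpace.toDual_apply_apply, Function.comp_def] using hf.comp_hasDerivAt 0 hc
  have := hasDerivAt_iff_tendsto_slope.mp hφ
  have h2 := this.mono_left (nhdsWithin_mono _ (fun t ht => ne_of_gt ht))
  refine h2.congr (fun t => ?_)
  simp [slope_def_field]

/-- If the difference quotients are eventually bounded below by `-a`, then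
`0 ≤ ⟪g, v⟫ + a`. -/
lemma inner_add_nonneg_of_quotients {H : Type*} [NormedAddCommGroup H] [InnerProductSpace ℝ H]
    [CompleteSpace H] (R : H → ℝ) (g x v : H) (a : ℝ) (h : HasGradientAt R g x)
    (hineq : ∀ t : ℝ, 0 < t → t ≤ 1 → 0 ≤ R (x + t • v) - R x + t * a) :
    0 ≤ ⟪g, v⟫ + a := by
  have ht := slope_tendsto_inner R g x v h
  have hbound : ∀ᶠ t in 𝓝[>] (0:ℝ), -a ≤ (R (x + t • v) - R x) / t := by
    filter_upwards [Ioc_mem_nhdsGT_of_mem (Set.left_mem_Ico.2 one_pos)] with t htt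
    rw [le_div_iff₀ htt.1]
    nlinarith [hineq t htt.1 htt.2]
  have := ge_of_tendsto ht hbound
  linarith

/-- Gradient inequality for convex functions: `R x + ⟪g, y - x⟫ ≤ R y`. -/
lemma convexOn_grad_le {H : Type*} [NormedAddCommGroup H] [InnerProductSpace ℝ H]
    [CompleteSpace H] (R : H → ℝ) (hconv : ConvexOn ℝ Set.univ R) (g x : H)
    (h : HasGradientAt R g x) (y : H) : R x + ⟪g, y - x⟫ ≤ R y := by
  have ht := slope_tendsto_inner R g x (y - x) h
  have hbound : ∀ᶠ t in 𝓝[>] (0:ℝ), (R (x + t • (y - x)) - R x) / t ≤ R y - R x := by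
    filter_upwards [Ioc_mem_nhdsGT_of_mem (Set.left_mem_Ico.2 one_pos)] with t htt
    have h1 := hconv.2 (Set.mem_univ x) (Set.mem_univ y)
      (show (0:ℝ) ≤ 1 - t by linarith [htt.2]) htt.1.le (by ring : (1 - t) + t = 1)
    have h2 : (1 - t) • x + t • y = x + t • (y - x) := by module
    rw [h2] at h1
    rw [div_le_iff₀ htt.1]
    simp only [smul_eq_mul] at h1
    nlinarith
  have := le_of_tendsto ht hbound
  linarith

lemma integrable_dirac_of_sm {α E : Type*} [MeasurableSpace α] [MeasurableSingletonClass α]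
    [NormedAddCommGroup E] {f : α → E} (hf : StronglyMeasurable f) (a : α) :
    Integrable f (Measure.dirac a) := by
  refine ⟨hf.aestronglyMeasurable, ?_⟩
  simp [HasFiniteIntegral, lintegral_dirac]

/-- Global optimality conditions for `F(μ) = R(∫ Φ dμ) + ∫ V dμ` over nonnegative
measures: a finite nonnegative measure `μ` (with everything integrable, i.e.
`F(μ) < ∞`) is a global minimizer of `F` over nonnegative measures if and only
if `F'(μ) : u ↦ ⟨R'(∫Φ dμ), Φ(u)⟩ + V(u)` is nonnegative on `Ω` and vanishes
`μ`-almost everywhere. -/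
theorem global_minimizer_iff_first_order_conditions
    {d : ℕ} {H : Type*} [NormedAddCommGroup H] [InnerProductSpace ℝ H]
    [CompleteSpace H] [SecondCountableTopology H]
    (Ω : Set (EuclideanSpace ℝ (Fin d)))
    (R : H → ℝ) (R' : H → H)
    (hRconvex : ConvexOn ℝ Set.univ R)
    (hRdiff : ∀ x, HasGradientAt R (R' x) x)
    (Φ : Ω → H) (V : Ω → ℝ) (hV : Continuous V) (hΦ : Continuous Φ)
    (μ : Measure Ω) [IsFiniteMeasure μ]
    (hμΦ : Integrable Φ μ) (hμV : Integrable V μ) :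
    ((∀ ν : Measure Ω, IsFiniteMeasure ν → Integrable Φ ν → Integrable V ν →
        R (∫ u, Φ u ∂μ) + ∫ u, V u ∂μ ≤ R (∫ u, Φ u ∂ν) + ∫ u, V u ∂ν)
      ↔
      ((∀ u : Ω, 0 ≤ ⟪R' (∫ u, Φ u ∂μ), Φ u⟫ + V u) ∧
        (∀ᵐ u ∂μ, ⟪R' (∫ u, Φ u ∂μ), Φ u⟫ + V u = 0))) := by
  set x₀ : H := ∫ u, Φ u ∂μ with hx₀
  set g : H := R' x₀ with hg
  have hgrad : HasGradientAt R g x₀ := hRdiff x₀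
  have hinnerint : Integrable (fun u => ⟪g, Φ u⟫) μ := hμΦ.const_inner g
  have hfint : Integrable (fun u => ⟪g, Φ u⟫ + V u) μ := hinnerint.add hμV
  have hinner_eq : ∫ u, ⟪g, Φ u⟫ ∂μ = ⟪g, x₀⟫ := integral_inner hμΦ g
  constructor
  · intro hmin
    -- first: nonnegativity pointwise
    have hpos : ∀ u : Ω, 0 ≤ ⟪g, Φ u⟫ + V u := by
      intro u
      refine inner_add_nonneg_of_quotients R g x₀ (Φ u) (V u) hgrad (fun t ht ht1 => ?_)
      set c : ℝ≥0∞ := ENNReal.ofReal t with hc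
      have hcne : c ≠ ∞ := ENNReal.ofReal_ne_top
      set ν : Measure Ω := μ + c • Measure.dirac u with hν
      have hfin : IsFiniteMeasure ν := by
        constructor
        rw [hν]
        simp only [Measure.add_apply, Measure.smul_apply, smul_eq_mul]
        exact ENNReal.add_lt_top.2 ⟨measure_lt_top μ _,
          ENNReal.mul_lt_top hcne.lt_top (by simp [Measure.dirac_apply])⟩
      have hΦd : Integrable Φ (Measure.dirac u) :=
        integrable_dirac_of_sm hΦ.stronglyMeasurable u
      have hVd : Integrable V (Measure.dirac u) :=
        integrable_dirac_of_sm hV.stronglyMeasurable u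
      have hΦν : Integrable Φ ν := hμΦ.add_measure (hΦd.smul_measure hcne)
      have hVν : Integrable V ν := hμV.add_measure (hVd.smul_measure hcne)
      have hctr : c.toReal = t := ENNReal.toReal_ofReal ht.le
      have hΦint : ∫ v, Φ v ∂ν = x₀ + t • Φ u := by
        rw [hν, integral_add_measure hμΦ (hΦd.smul_measure hcne),
          integral_smul_measure, integral_dirac, hctr, hx₀]
      have hVint : ∫ v, V v ∂ν = ∫ v, V v ∂μ + t * V u := by
        rw [hν, integral_add_measure hμV (hVd.smul_measure hcne),
          integral_smul_measure, integral_dirac, hctr]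
        simp [smul_eq_mul]
      have := hmin ν hfin hΦν hVν
      rw [hΦint, hVint] at this
      linarith
    refine ⟨hpos, ?_⟩
    -- second: integral of f is ≤ 0 via scaling down
    have hneg : ⟪g, x₀⟫ + ∫ u, V u ∂μ ≤ 0 := by
      have key : 0 ≤ ⟪g, -x₀⟫ + (- ∫ u, V u ∂μ) := by
        refine inner_add_nonneg_of_quotients R g x₀ (-x₀) (- ∫ u, V u ∂μ) hgrad
          (fun t ht ht1 => ?_)
        set c : ℝ≥0∞ := ENNReal.ofReal (1 - t) with hc
        have hcne : c ≠ ∞ := ENNReal.ofReal_ne_top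
        set ν : Measure Ω := c • μ with hν
        have hfin : IsFiniteMeasure ν := by
          constructor
          rw [hν]
          simp only [Measure.smul_apply, smul_eq_mul]
          exact ENNReal.mul_lt_top hcne.lt_top (measure_lt_top μ _)
        have hΦν : Integrable Φ ν := hμΦ.smul_measure hcne
        have hVν : Integrable V ν := hμV.smul_measure hcne
        have hctr : c.toReal = 1 - t := ENNReal.toReal_ofReal (by linarith)
        have hΦint : ∫ v, Φ v ∂ν = x₀ + t • (-x₀) := by
          rw [hν, integral_smul_measure, hctr, ← hx₀]
          module
        have hVint : ∫ v, V v ∂ν = (1 - t) * ∫ v, V v ∂μ := by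
          rw [hν, integral_smul_measure, hctr, smul_eq_mul]
        have := hmin ν hfin hΦν hVν
        rw [hΦint, hVint] at this
        nlinarith
      rw [inner_neg_right] at key
      linarith
    have hintf : ∫ u, (⟪g, Φ u⟫ + V u) ∂μ = 0 := by
      have h1 : ∫ u, (⟪g, Φ u⟫ + V u) ∂μ = ⟪g, x₀⟫ + ∫ u, V u ∂μ := by
        rw [integral_add hinnerint hμV, hinner_eq]
      have h2 : 0 ≤ ∫ u, (⟪g, Φ u⟫ + V u) ∂μ :=
        integral_nonneg hpos
      linarith
    have h0 := (integral_eq_zero_iff_of_nonneg hpos hfint).mp hintf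
    filter_upwards [h0] with u hu
    simpa using hu
  · rintro ⟨hpos, hae⟩ ν hfin hΦν hVν
    have hgradle := convexOn_grad_le R hRconvex g x₀ hgrad (∫ u, Φ u ∂ν)
    have hinnerν : ∫ u, ⟪g, Φ u⟫ ∂ν = ⟪g, ∫ u, Φ u ∂ν⟫ := integral_inner hΦν g
    have hfν : 0 ≤ ∫ u, (⟪g, Φ u⟫ + V u) ∂ν :=
      integral_nonneg hpos
    have hsplitν : ∫ u, (⟪g, Φ u⟫ + V u) ∂ν = ⟪g, ∫ u, Φ u ∂ν⟫ + ∫ u, V u ∂ν := by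
      rw [integral_add (hΦν.const_inner g) hVν, hinnerν]
    have hμf : ∫ u, (⟪g, Φ u⟫ + V u) ∂μ = 0 := by
      rw [integral_congr_ae hae]
      simp
    have hμsplit : ⟪g, x₀⟫ + ∫ u, V u ∂μ = 0 := by
      rw [← hinner_eq, ← integral_add hinnerint hμV]
      exact hμf
    have hexp : ⟪g, (∫ u, Φ u ∂ν) - x₀⟫ = ⟪g, ∫ u, Φ u ∂ν⟫ - ⟪g, x₀⟫ := by
      rw [inner_sub_right]
    linarith
end

section
/- Let X : [0,T] × ℝ^d → ℝ^d be a continuous map with X(0,·) = id, and suppose that for all ε > 0 there exists η > 0 such that u ∈ B(0,η) implies X_t⁻¹({u}) ⊂ B(0,ε) for all t. If K is a closed subset of ℝ^d contained in B(0, r_b) that separates the sphere r_a·S^{d-1} from the sphere r_b·S^{d-1} for some 0 < r_a < r_b, then for all t ∈ [0,T] the set X_t(K) is contained in some ball B(0,r'_b) and separates r'_a·S^{d-1} from r'_b·S^{d-1} for some 0 < r'_a < r'_b. -/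
noncomputable section

variable {d : ℕ}

open MeasureTheory Metric Set
open scoped RealInnerProductSpace

abbrev Eu (d : ℕ) := EuclideanSpace ℝ (Fin d)

set_option maxHeartbeats 2000000 in
/-- Milnor's theorem: there is no C¹ map on a neighborhood of the closed unit
ball which is sphere-valued and restricts to the identity on the unit sphere. -/
theorem no_smooth_retraction {d : ℕ} (W : Set (Eu d)) (hWo : IsOpen W)
    (hWb : closedBall (0 : Eu d) 1 ⊆ W) (r : Eu d → Eu d)
    (hr : ContDiffOn ℝ 1 r W) (hsph : ∀ x ∈ W, ‖r x‖ = 1)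
    (hid : ∀ x : Eu d, ‖x‖ = 1 → r x = x) : False := by
  classical
  by_cases hss : Subsingleton (Eu d)
  · have h1 := hsph 0 (hWb (mem_closedBall_self zero_le_one))
    rw [Subsingleton.elim (r 0) 0] at h1
    simp at h1
  haveI : Nontrivial (Eu d) := not_subsingleton_iff_nontrivial.1 hss
  set B : Set (Eu d) := ball 0 1 with hB_def
  set Bc : Set (Eu d) := closedBall 0 1 with hBc_def
  have hBcW : Bc ⊆ W := hWb
  have hBBc : B ⊆ Bc := ball_subset_closedBall
  have hdiff : ∀ x ∈ W, HasFDerivAt r (fderiv ℝ r x) x := fun x hx =>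
    ((hr.differentiableOn one_ne_zero).differentiableAt (hWo.mem_nhds hx)).hasFDerivAt
  set A : Eu d → (Eu d →L[ℝ] Eu d) := fderiv ℝ r with hA_def
  have hAcont : ContinuousOn A W := hr.continuousOn_fderiv_of_isOpen hWo le_rfl
  set N : Eu d → (Eu d →L[ℝ] Eu d) := fun x => A x - ContinuousLinearMap.id ℝ (Eu d)
    with hN_def
  have hNcont : ContinuousOn N Bc := (hAcont.mono hBcW).sub continuousOn_const
  obtain ⟨C, hC⟩ :=
    (isCompact_closedBall (0:Eu d) 1).exists_bound_of_continuousOn hNcont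
  have hC0 : 0 ≤ C := le_trans (norm_nonneg _) (hC 0 (mem_closedBall_self zero_le_one))
  set f : ℝ → Eu d → Eu d := fun t x => x + t • (r x - x) with hf_def
  set J : ℝ → Eu d → (Eu d →L[ℝ] Eu d) :=
    fun t x => ContinuousLinearMap.id ℝ (Eu d) + t • N x with hJ_def
  have hJderiv : ∀ t : ℝ, ∀ x ∈ W, HasFDerivAt (f t) (J t x) x := by
    intro t x hx
    have h1 : HasFDerivAt (fun z => r z - z) (N x) x := (hdiff x hx).sub (hasFDerivAt_id x)
    exact (hasFDerivAt_id x).add (h1.const_smul t)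
  set detJ : ℝ × Eu d → ℝ := fun p => ContinuousLinearMap.det (J p.1 p.2) with hdetJ_def
  have hJc : ∀ t : ℝ, ContinuousOn (fun x => J t x) Bc :=
    fun t => continuousOn_const.add (hNcont.const_smul t)
  have hdetc : ContinuousOn detJ (Set.Icc 0 1 ×ˢ Bc) := by
    apply ContinuousLinearMap.continuous_det.comp_continuousOn
    exact continuousOn_const.add
      (continuousOn_fst.smul (hNcont.comp continuousOn_snd (fun p hp => hp.2)))
  have hUC := ((isCompact_Icc (a := (0:ℝ)) (b := 1)).prod
    (isCompact_closedBall (0:Eu d) 1)).uniformContinuousOn_of_continuous hdetc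
  rw [Metric.uniformContinuousOn_iff] at hUC
  obtain ⟨δ₂, hδ₂, hδ2⟩ := hUC (1/2) one_half_pos
  set t₀ : ℝ := min (δ₂/2) (min (1/2) (1/(2*(C+1)))) with ht₀_def
  have ht₀pos : 0 < t₀ := by
    apply lt_min (by positivity) (lt_min one_half_pos (by positivity))
  have ht₀half : t₀ ≤ 1/2 := le_trans (min_le_right _ _) (min_le_left _ _)
  have ht₀δ : t₀ ≤ δ₂/2 := min_le_left _ _
  have ht₀C : t₀ ≤ 1/(2*(C+1)) := le_trans (min_le_right _ _) (min_le_right _ _)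
  have hdet1 : ∀ x : Eu d, detJ (0, x) = 1 := by
    intro x
    have : J 0 x = ContinuousLinearMap.id ℝ (Eu d) := by
      rw [hJ_def]
      ext v
      simp
    rw [hdetJ_def]
    simp only [this]
    exact LinearMap.det_id
  have hdetpos : ∀ t ∈ Set.Icc 0 t₀, ∀ x ∈ Bc, 1/2 < detJ (t, x) := by
    intro t ht x hx
    have hmem1 : (t, x) ∈ Set.Icc (0:ℝ) 1 ×ˢ Bc :=
      ⟨⟨ht.1, le_trans ht.2 (by linarith)⟩, hx⟩
    have hmem0 : ((0:ℝ), x) ∈ Set.Icc (0:ℝ) 1 ×ˢ Bc := ⟨⟨le_refl _, zero_le_one⟩, hx⟩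
    have hdist : dist (t, x) ((0:ℝ), x) < δ₂ := by
      rw [Prod.dist_eq]
      simp only [dist_self]
      rw [Real.dist_eq, sub_zero, abs_of_nonneg ht.1]
      have : t ≤ δ₂ / 2 := le_trans ht.2 ht₀δ
      calc max t 0 = t := max_eq_left ht.1
        _ < δ₂ := by linarith
    have := hδ2 (t, x) hmem1 ((0:ℝ), x) hmem0 hdist
    rw [Real.dist_eq, hdet1 x] at this
    have := abs_lt.1 this
    linarith [this.1]
  -- injectivity
  have hinj : ∀ t ∈ Set.Icc 0 t₀, Set.InjOn (f t) Bc := by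
    intro t ht a ha b hb hfeq
    have hg : ∀ x ∈ Bc, HasFDerivWithinAt (fun z => r z - z) (N x) Bc x := fun x hx =>
      ((hdiff x (hBcW hx)).sub (hasFDerivAt_id x)).hasFDerivWithinAt
    have hlip := Convex.norm_image_sub_le_of_norm_hasFDerivWithin_le hg hC
      (convex_closedBall _ _) ha hb
    have h2 : a - b = t • (r b - b) - t • (r a - a) := by
      rw [sub_eq_sub_iff_add_eq_add, add_comm (t • (r b - b)) b]
      exact hfeq
    have hab : b - a = t • ((r a - a) - (r b - b)) := by
      rw [smul_sub]
      rw [show b - a = -(a - b) by abel, h2]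
      abel
    have hnorm : ‖b - a‖ ≤ t * C * ‖b - a‖ := by
      calc ‖b - a‖ = ‖t • ((r a - a) - (r b - b))‖ := by rw [hab]
        _ = t * ‖(r a - a) - (r b - b)‖ := by
            rw [norm_smul, Real.norm_eq_abs, abs_of_nonneg ht.1]
        _ = t * ‖(r b - b) - (r a - a)‖ := by rw [norm_sub_rev]
        _ ≤ t * (C * ‖b - a‖) :=
            mul_le_mul_of_nonneg_left hlip ht.1
        _ = t * C * ‖b - a‖ := by ring
    have htC : t * C ≤ 1/2 := by
      have h1 : t ≤ 1/(2*(C+1)) := le_trans ht.2 ht₀C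
      have h2 : t * C ≤ (1/(2*(C+1))) * C :=
        mul_le_mul_of_nonneg_right h1 hC0
      have h3 : (1/(2*(C+1))) * C ≤ 1/2 := by
        rw [div_mul_eq_mul_div, div_le_div_iff₀ (by positivity) (by norm_num)]
        nlinarith
      linarith
    have hzero : ‖b - a‖ = 0 := by
      by_contra hz
      have hpos : 0 < ‖b - a‖ := lt_of_le_of_ne (norm_nonneg _) (Ne.symm hz)
      nlinarith
    have := norm_sub_eq_zero_iff.1 hzero
    exact this.symm
  -- f t maps Bc into Bc
  have hmaps : ∀ t ∈ Set.Icc (0:ℝ) 1, ∀ x ∈ Bc, f t x ∈ Bc := by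
    intro t ht x hx
    have hx1 : ‖x‖ ≤ 1 := by rwa [hBc_def, mem_closedBall, dist_eq_norm, sub_zero] at hx
    have hrx : ‖r x‖ = 1 := hsph x (hBcW hx)
    have hrw : f t x = (1 - t) • x + t • r x := by
      rw [hf_def]; module
    rw [hBc_def, mem_closedBall, dist_eq_norm, sub_zero, hrw]
    calc ‖(1 - t) • x + t • r x‖ ≤ ‖(1 - t) • x‖ + ‖t • r x‖ := norm_add_le _ _
      _ = (1 - t) * ‖x‖ + t * ‖r x‖ := by
          rw [norm_smul, norm_smul, Real.norm_eq_abs, Real.norm_eq_abs,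
            abs_of_nonneg (by linarith [ht.2]), abs_of_nonneg ht.1]
      _ ≤ (1 - t) * 1 + t * 1 := by
          rw [hrx]
          exact add_le_add (mul_le_mul_of_nonneg_left hx1 (by linarith [ht.2])) le_rfl
      _ = 1 := by ring
  have hfix : ∀ t : ℝ, ∀ x : Eu d, ‖x‖ = 1 → f t x = x := by
    intro t x hx
    rw [hf_def]
    simp [hid x hx]
  have hfc : ∀ t : ℝ, ContinuousOn (f t) Bc :=
    fun t => (continuousOn_id.add (((hr.continuousOn.mono hBcW).sub
      continuousOn_id).const_smul t))
  -- surjectivity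
  have hsurj : ∀ t ∈ Set.Icc 0 t₀, B ⊆ f t '' Bc := by
    intro t ht
    have himgcpt : IsCompact (f t '' Bc) :=
      (isCompact_closedBall _ _).image_of_continuousOn (hfc t)
    set Sset : Set (Eu d) := f t '' Bc ∩ B with hSset_def
    have hSopen : IsOpen Sset := by
      rw [isOpen_iff_mem_nhds]
      rintro y ⟨⟨x, hxBc, rfl⟩, hyB⟩
      have hxn : ‖x‖ ≤ 1 := by rwa [hBc_def, mem_closedBall, dist_eq_norm, sub_zero] at hxBc
      have hxB : x ∈ B := by
        rcases lt_or_eq_of_le hxn with h | h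
        · rwa [hB_def, mem_ball, dist_eq_norm, sub_zero]
        · exfalso
          have := hfix t x h
          rw [this] at hyB
          rw [hB_def, mem_ball, dist_eq_norm, sub_zero] at hyB
          linarith
      have hxW : x ∈ W := hBcW hxBc
      have hdet_ne : ContinuousLinearMap.det (J t x) ≠ 0 :=
        ne_of_gt (lt_trans one_half_pos (hdetpos t ht x hxBc))
      set bEu := (EuclideanSpace.basisFun (Fin d) ℝ).toBasis with hbEu_def
      have hunit : IsUnit ((LinearMap.toMatrix bEu bEu)
          (↑(J t x) : Eu d →ₗ[ℝ] Eu d)).det := by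
        rw [LinearMap.det_toMatrix]
        exact isUnit_iff_ne_zero.2 hdet_ne
      set ceq := (LinearEquiv.ofIsUnitDet hunit).toContinuousLinearEquiv with hceq_def
      have hceq_coe : (ceq : Eu d →L[ℝ] Eu d) = J t x := by
        apply ContinuousLinearMap.coe_injective
        rw [hceq_def]
        change ((LinearEquiv.ofIsUnitDet hunit : Eu d →ₗ[ℝ] Eu d)) = _
        exact LinearEquiv.coe_ofIsUnitDet hunit
      have hcd : ContDiffAt ℝ 1 (f t) x := by
        have hcdo : ContDiffOn ℝ 1 (f t) W :=
          contDiffOn_id.add ((hr.sub contDiffOn_id).const_smul t)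
        exact (hcdo x hxW).contDiffAt (hWo.mem_nhds hxW)
      have hstrict : HasStrictFDerivAt (f t) ((ceq : Eu d ≃L[ℝ] Eu d) :
          Eu d →L[ℝ] Eu d) x := by
        have h := hcd.hasStrictFDerivAt one_ne_zero
        have huniq : fderiv ℝ (f t) x = J t x := (hJderiv t x hxW).fderiv
        rw [huniq] at h
        rw [hceq_coe]
        exact h
      have hmap := hstrict.map_nhds_eq_of_equiv
      have h1 : f t '' B ∈ nhds (f t x) := by
        rw [← hmap]
        exact Filter.image_mem_map (isOpen_ball.mem_nhds hxB)
      refine Filter.mem_of_superset (Filter.inter_mem h1 (isOpen_ball.mem_nhds hyB)) ?_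
      rintro z ⟨⟨x', hx', rfl⟩, hz2⟩
      exact ⟨⟨x', hBBc hx', rfl⟩, hz2⟩
    have ht01 : t < 1 := lt_of_le_of_lt ht.2 (by linarith)
    have hne : f t 0 ∈ Sset := by
      constructor
      · exact ⟨0, mem_closedBall_self zero_le_one, rfl⟩
      · have h0W : (0 : Eu d) ∈ W := hBcW (mem_closedBall_self zero_le_one)
        have : f t 0 = t • r 0 := by rw [hf_def]; simp
        rw [hB_def, mem_ball, dist_eq_norm, sub_zero, this, norm_smul,
          Real.norm_eq_abs, abs_of_nonneg ht.1, hsph 0 h0W, mul_one]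
        exact ht01
    by_contra hnotsub
    rw [Set.not_subset] at hnotsub
    obtain ⟨y₀, hy₀B, hy₀notin⟩ := hnotsub
    have hpc := (convex_ball (0:Eu d) 1).isPreconnected
    have hcover : B ⊆ Sset ∪ (f t '' Bc)ᶜ := by
      intro z hz
      by_cases hzin : z ∈ f t '' Bc
      · exact Or.inl ⟨hzin, hz⟩
      · exact Or.inr hzin
    obtain ⟨z, hzB, hz1, hz2⟩ := hpc Sset ((f t '' Bc)ᶜ) hSopen
      himgcpt.isClosed.isOpen_compl hcover ⟨f t 0, hne.2, hne⟩ ⟨y₀, hy₀B, hy₀notin⟩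
    exact hz2 hz1.1
  -- the measure computation
  set μ := (volume : Measure (Eu d)) with hμ_def
  have hsphere_null : μ (sphere (0:Eu d) 1) = 0 := Measure.addHaar_sphere μ 0 1
  have himg_meas : ∀ t ∈ Set.Icc 0 t₀, μ (f t '' B) = μ B := by
    intro t ht
    apply le_antisymm
    · have hsub1 : f t '' B ⊆ Bc := by
        rintro _ ⟨x, hx, rfl⟩
        exact hmaps t ⟨ht.1, le_trans ht.2 (by linarith)⟩ x (hBBc hx)
      have h1 : μ (f t '' B) ≤ μ Bc := measure_mono hsub1
      have h2 : μ Bc ≤ μ B := by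
        rw [hBc_def, ← ball_union_sphere]
        calc μ (ball (0:Eu d) 1 ∪ sphere 0 1) ≤ μ (ball (0:Eu d) 1) + μ (sphere 0 1) :=
              measure_union_le _ _
          _ = μ B := by rw [hsphere_null, add_zero]
      exact le_trans h1 h2
    · apply measure_mono
      intro z hz
      obtain ⟨x, hxBc, hfx⟩ := hsurj t ht hz
      have hxB : x ∈ B := by
        rcases lt_or_eq_of_le (by rwa [hBc_def, mem_closedBall, dist_eq_norm, sub_zero]
            at hxBc : ‖x‖ ≤ 1) with h | h
        · rwa [hB_def, mem_ball, dist_eq_norm, sub_zero]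
        · exfalso
          rw [hfix t x h] at hfx
          rw [hB_def, mem_ball, dist_eq_norm, sub_zero] at hz
          rw [hfx] at h
          linarith
      exact ⟨x, hxB, hfx⟩
  have hchange : ∀ t ∈ Set.Icc 0 t₀,
      (∫⁻ x in B, ENNReal.ofReal |detJ (t, x)| ∂μ) = μ (f t '' B) := by
    intro t ht
    exact lintegral_abs_det_fderiv_eq_addHaar_image μ measurableSet_ball
      (fun x hx => (hJderiv t x (hBcW (hBBc hx))).hasFDerivWithinAt)
      ((hinj t ht).mono hBBc)
  set q : ℝ → ℝ := fun t => ∫ x in B, detJ (t, x) ∂μ with hq_def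
  have hdetc' : ∀ t : ℝ, ContinuousOn (fun x => detJ (t, x)) Bc := by
    intro t
    exact ContinuousLinearMap.continuous_det.comp_continuousOn (hJc t)
  have hInt : ∀ t : ℝ, IntegrableOn (fun x => detJ (t, x)) B μ :=
    fun t => ((hdetc' t).integrableOn_compact (isCompact_closedBall _ _)).mono_set hBBc
  have hq_eq : ∀ t ∈ Set.Icc 0 t₀, q t = (μ B).toReal := by
    intro t ht
    have hpos : ∀ x ∈ B, 0 ≤ detJ (t, x) := fun x hx =>
      le_of_lt (lt_trans one_half_pos (hdetpos t ht x (hBBc hx)))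
    have h1 : ENNReal.ofReal (q t) = μ (f t '' B) := by
      rw [← hchange t ht, hq_def]
      rw [MeasureTheory.ofReal_integral_eq_lintegral_ofReal (hInt t)
        ((ae_restrict_iff' measurableSet_ball).2 (Filter.Eventually.of_forall hpos))]
      refine setLIntegral_congr_fun measurableSet_ball
        (fun x hx => ?_)
      rw [abs_of_nonneg (hpos x hx)]
    rw [himg_meas t ht] at h1
    have hqnn : 0 ≤ q t := setIntegral_nonneg measurableSet_ball hpos
    have h2 : (ENNReal.ofReal (q t)).toReal = (μ B).toReal := by rw [h1]
    rwa [ENNReal.toReal_ofReal hqnn] at h2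
  have hμBfin : μ B ≠ ⊤ := by
    have := (isCompact_closedBall (0:Eu d) 1).measure_lt_top (μ := μ)
    exact ne_of_lt (lt_of_le_of_lt (measure_mono hBBc) this)
  have hμBpos : 0 < (μ B).toReal :=
    ENNReal.toReal_pos (ne_of_gt (measure_ball_pos μ 0 one_pos)) hμBfin
  -- polynomial expansion
  set bEu := (EuclideanSpace.basisFun (Fin d) ℝ).toBasis with hbEu_def
  set m : Eu d → Matrix (Fin d) (Fin d) ℝ :=
    fun x => LinearMap.toMatrix bEu bEu (↑(N x) : Eu d →ₗ[ℝ] Eu d) with hm_def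
  have hdet_eq : ∀ t x, detJ (t, x) = Matrix.det (1 + t • m x) := by
    intro t x
    have h1 : detJ (t, x) = LinearMap.det (↑(J t x) : Eu d →ₗ[ℝ] Eu d) := rfl
    rw [h1, ← LinearMap.det_toMatrix bEu]
    congr 1
    have h2 : (↑(J t x) : Eu d →ₗ[ℝ] Eu d) = LinearMap.id + t • (↑(N x) : Eu d →ₗ[ℝ] Eu d) := by
      ext v
      rw [hJ_def]
      simp
    rw [h2, map_add, _root_.map_smul, LinearMap.toMatrix_id, hm_def]
  have hmc : ∀ i j, ContinuousOn (fun x => m x i j) Bc := by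
    intro i j
    have heq : ∀ x, m x i j = (N x) (bEu j) i := by
      intro x
      show (LinearMap.toMatrix bEu bEu (↑(N x) : Eu d →ₗ[ℝ] Eu d)) i j = _
      rw [LinearMap.toMatrix_apply, hbEu_def, OrthonormalBasis.coe_toBasis_repr_apply,
        EuclideanSpace.basisFun_repr]
      rfl
    have h2 : ContinuousOn (fun x => (N x) (bEu j)) Bc :=
      hNcont.clm_apply continuousOn_const
    have h3 : ContinuousOn (fun x => (N x) (bEu j) i) Bc :=
      (EuclideanSpace.proj (𝕜 := ℝ) i).continuous.comp_continuousOn h2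
    exact h3.congr (fun x _ => heq x)
  -- expansion of the determinant as a polynomial in t
  have hexpand : ∀ (t : ℝ) (x : Eu d), Matrix.det (1 + t • m x) =
      ∑ σ : Equiv.Perm (Fin d), ∑ s ∈ (Finset.univ : Finset (Fin d)).powerset,
        ((Equiv.Perm.sign σ : ℤ) : ℝ) * ((∏ i ∈ s, (1 : Matrix (Fin d) (Fin d) ℝ) (σ i) i) *
          (t ^ (Finset.univ \ s).card * ∏ i ∈ Finset.univ \ s, m x (σ i) i)) := by
    intro t x
    rw [Matrix.det_apply]
    refine Finset.sum_congr rfl (fun σ _ => ?_)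
    have hentry : ∀ i : Fin d, (1 + t • m x) (σ i) i =
        (1 : Matrix (Fin d) (Fin d) ℝ) (σ i) i + t * m x (σ i) i := by
      intro i
      rw [Matrix.add_apply, Matrix.smul_apply, smul_eq_mul]
    rw [Finset.prod_congr rfl (fun i _ => hentry i), Finset.prod_add]
    rw [show (Equiv.Perm.sign σ • ∑ s ∈ (Finset.univ : Finset (Fin d)).powerset,
        (∏ i ∈ s, (1 : Matrix (Fin d) (Fin d) ℝ) (σ i) i) *
          ∏ i ∈ Finset.univ \ s, (t * m x (σ i) i)) =
        ∑ s ∈ (Finset.univ : Finset (Fin d)).powerset,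
        ((Equiv.Perm.sign σ : ℤ) : ℝ) * ((∏ i ∈ s, (1 : Matrix (Fin d) (Fin d) ℝ) (σ i) i) *
          ∏ i ∈ Finset.univ \ s, (t * m x (σ i) i)) by
      rw [Finset.smul_sum]
      refine Finset.sum_congr rfl (fun s _ => ?_)
      rw [Units.smul_def, zsmul_eq_mul]]
    refine Finset.sum_congr rfl (fun s _ => ?_)
    congr 1
    congr 1
    rw [Finset.prod_mul_distrib, Finset.prod_const]
  -- integrability of the coefficient functions
  have hcoefInt : ∀ (σ : Equiv.Perm (Fin d)) (s : Finset (Fin d)),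
      IntegrableOn (fun x => ∏ i ∈ Finset.univ \ s, m x (σ i) i) B μ := by
    intro σ s
    have hcont : ContinuousOn (fun x => ∏ i ∈ Finset.univ \ s, m x (σ i) i) Bc :=
      continuousOn_finset_prod _ (fun i _ => hmc (σ i) i)
    exact (hcont.integrableOn_compact (isCompact_closedBall _ _)).mono_set hBBc
  set P : Polynomial ℝ :=
    ∑ σ : Equiv.Perm (Fin d), ∑ s ∈ (Finset.univ : Finset (Fin d)).powerset,
      Polynomial.C (((Equiv.Perm.sign σ : ℤ) : ℝ) *
        ((∏ i ∈ s, (1 : Matrix (Fin d) (Fin d) ℝ) (σ i) i) *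
          (∫ x in B, ∏ i ∈ Finset.univ \ s, m x (σ i) i ∂μ))) *
        Polynomial.X ^ (Finset.univ \ s).card with hP_def
  have hPeval : ∀ t : ℝ, q t = P.eval t := by
    intro t
    show (∫ x in B, detJ (t, x) ∂μ) = P.eval t
    have h1 : (∫ x in B, detJ (t, x) ∂μ) =
        ∫ x in B, (∑ σ : Equiv.Perm (Fin d), ∑ s ∈ (Finset.univ : Finset (Fin d)).powerset,
          ((Equiv.Perm.sign σ : ℤ) : ℝ) * ((∏ i ∈ s, (1 : Matrix (Fin d) (Fin d) ℝ) (σ i) i) *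
            (t ^ (Finset.univ \ s).card * ∏ i ∈ Finset.univ \ s, m x (σ i) i))) ∂μ := by
      refine setIntegral_congr_fun measurableSet_ball (fun x _ => ?_)
      rw [hdet_eq, hexpand]
    rw [h1]
    have hIntTerm : ∀ (σ : Equiv.Perm (Fin d)), ∀ s ∈ (Finset.univ : Finset (Fin d)).powerset,
        Integrable (fun x => ((Equiv.Perm.sign σ : ℤ) : ℝ) *
          ((∏ i ∈ s, (1 : Matrix (Fin d) (Fin d) ℝ) (σ i) i) *
            (t ^ (Finset.univ \ s).card * ∏ i ∈ Finset.univ \ s, m x (σ i) i)))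
          (μ.restrict B) := by
      intro σ s _
      have h := (hcoefInt σ s).const_mul
        (((Equiv.Perm.sign σ : ℤ) : ℝ) * ((∏ i ∈ s, (1 : Matrix (Fin d) (Fin d) ℝ) (σ i) i) *
          t ^ (Finset.univ \ s).card))
      refine h.congr (Filter.Eventually.of_forall (fun x => ?_))
      ring
    rw [integral_finset_sum _ (fun σ _ => integrable_finset_sum _ (fun s hs => hIntTerm σ s hs))]
    rw [hP_def]
    rw [Polynomial.eval_finset_sum]
    refine Finset.sum_congr rfl (fun σ _ => ?_)
    rw [integral_finset_sum _ (fun s hs => hIntTerm σ s hs)]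
    rw [Polynomial.eval_finset_sum]
    refine Finset.sum_congr rfl (fun s _ => ?_)
    rw [Polynomial.eval_mul, Polynomial.eval_C, Polynomial.eval_pow, Polynomial.eval_X]
    have h2 : (fun x => ((Equiv.Perm.sign σ : ℤ) : ℝ) *
        ((∏ i ∈ s, (1 : Matrix (Fin d) (Fin d) ℝ) (σ i) i) *
          (t ^ (Finset.univ \ s).card * ∏ i ∈ Finset.univ \ s, m x (σ i) i))) =
        (fun x => (((Equiv.Perm.sign σ : ℤ) : ℝ) *
          ((∏ i ∈ s, (1 : Matrix (Fin d) (Fin d) ℝ) (σ i) i) * t ^ (Finset.univ \ s).card)) *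
          (∏ i ∈ Finset.univ \ s, m x (σ i) i)) := by
      funext x
      ring
    rw [h2, MeasureTheory.integral_const_mul]
    ring
  have hPconst : ∀ t ∈ Set.Icc 0 t₀, P.eval t = (μ B).toReal := by
    intro t ht
    rw [← hPeval]
    exact hq_eq t ht
  have hPeq : ∀ t : ℝ, P.eval t = (μ B).toReal := by
    intro t
    have h0 : P - Polynomial.C ((μ B).toReal) = 0 := by
      by_contra hne
      have hroots : {x : ℝ | (P - Polynomial.C ((μ B).toReal)).IsRoot x}.Infinite := by
        refine Set.Infinite.mono ?_ (Set.Icc_infinite ht₀pos)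
        intro s hs
        show (P - Polynomial.C ((μ B).toReal)).IsRoot s
        rw [Polynomial.IsRoot, Polynomial.eval_sub, Polynomial.eval_C, hPconst s hs, sub_self]
      exact hne (Polynomial.eq_zero_of_infinite_isRoot _ hroots)
    have := congrArg (Polynomial.eval t) h0
    rwa [Polynomial.eval_sub, Polynomial.eval_C, Polynomial.eval_zero, sub_eq_zero] at this
  have hq1 : q 1 = (μ B).toReal := by rw [hPeval 1]; exact hPeq 1
  -- at t = 1 the determinant vanishes
  have hdet0 : ∀ x ∈ B, detJ (1, x) = 0 := by
    intro x hx
    have hxW : x ∈ W := hBcW (hBBc hx)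
    have hJ1 : J 1 x = A x := by
      rw [hJ_def, hN_def]
      simp
    have hconst : (fun z => (inner ℝ (r z) (r z) : ℝ)) =ᶠ[nhds x] (fun _ => (1:ℝ)) := by
      filter_upwards [hWo.mem_nhds hxW] with z hz
      rw [real_inner_self_eq_norm_sq, hsph z hz, one_pow]
    have hd1 : HasFDerivAt (fun z => (inner ℝ (r z) (r z) : ℝ))
        ((fderivInnerCLM ℝ (r x, r x)).comp ((A x).prod (A x))) x :=
      HasFDerivAt.inner ℝ (hdiff x hxW) (hdiff x hxW)
    have hd2 : HasFDerivAt (fun z => (inner ℝ (r z) (r z) : ℝ)) (0 : Eu d →L[ℝ] ℝ) x := by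
      have hcf : HasFDerivAt (fun _ : Eu d => (1:ℝ)) (0 : Eu d →L[ℝ] ℝ) x :=
        hasFDerivAt_const 1 x
      exact hcf.congr_of_eventuallyEq hconst
    have huniq := hd1.unique hd2
    have horth : ∀ v : Eu d, (inner ℝ (r x) ((A x) v) : ℝ) = 0 := by
      intro v
      have h := congrArg (fun L : Eu d →L[ℝ] ℝ => L v) huniq
      simp only [ContinuousLinearMap.coe_comp', Function.comp_apply,
        ContinuousLinearMap.prod_apply, ContinuousLinearMap.zero_apply] at h
      rw [fderivInnerCLM_apply] at h
      simp only at h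
      have hcomm : (inner ℝ ((A x) v) (r x) : ℝ) = inner ℝ (r x) ((A x) v) := real_inner_comm _ _
      rw [hcomm] at h
      linarith
    by_contra hdet_ne
    have hdet_lm : LinearMap.det (↑(A x) : Eu d →ₗ[ℝ] Eu d) ≠ 0 := by
      intro h
      apply hdet_ne
      rw [hdetJ_def]
      simp only [hJ1]
      exact h
    have hunit : IsUnit ((LinearMap.toMatrix bEu bEu) (↑(A x) : Eu d →ₗ[ℝ] Eu d)).det := by
      rw [LinearMap.det_toMatrix]
      exact isUnit_iff_ne_zero.2 hdet_lm
    set leq := LinearEquiv.ofIsUnitDet hunit with hleq_def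
    have happ : (A x) (leq.symm (r x)) = r x := by
      have h1 : leq (leq.symm (r x)) = r x := leq.apply_symm_apply _
      have h2 : leq (leq.symm (r x)) = (A x) (leq.symm (r x)) := by
        have h3 := LinearEquiv.coe_ofIsUnitDet hunit
        rw [hleq_def]
        exact LinearMap.congr_fun h3 _
      rw [← h2, h1]
    have h0 := horth (leq.symm (r x))
    rw [happ, real_inner_self_eq_norm_sq, hsph x hxW] at h0
    norm_num at h0
  have hq1' : q 1 = 0 := by
    show (∫ x in B, detJ (1, x) ∂μ) = 0
    rw [setIntegral_congr_fun measurableSet_ball hdet0]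
    simp
  rw [hq1'] at hq1
  linarith

/-- No continuous globally sphere-valued map which is the identity on the
unit sphere. -/
theorem no_cont_retraction {d : ℕ} (F : Eu d → Eu d) (hF : Continuous F)
    (hsph : ∀ x, ‖F x‖ = 1) (hid : ∀ x : Eu d, ‖x‖ = 1 → F x = x) : False := by
  classical
  by_cases hss : Subsingleton (Eu d)
  · have h0 : F 0 = 0 := Subsingleton.elim _ _
    have h1 := hsph 0
    rw [h0] at h1
    simp at h1
  haveI : Nontrivial (Eu d) := not_subsingleton_iff_nontrivial.1 hss
  have hUC := (isCompact_closedBall (0:Eu d) 3).uniformContinuousOn_of_continuous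
    hF.continuousOn
  rw [Metric.uniformContinuousOn_iff] at hUC
  obtain ⟨δ₀, hδ₀, hδuc⟩ := hUC (1/4) (by norm_num)
  set δ₁ : ℝ := min δ₀ 1 with hδ₁_def
  have hδ₁pos : 0 < δ₁ := lt_min hδ₀ one_pos
  have hδ₁le : δ₁ ≤ 1 := min_le_right _ _
  have hδuc' : ∀ x ∈ closedBall (0:Eu d) 3, ∀ y ∈ closedBall (0:Eu d) 3,
      dist x y < δ₁ → dist (F x) (F y) < 1/4 := by
    intro x hx y hy hd
    exact hδuc x hx y hy (lt_of_lt_of_le hd (min_le_left _ _))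
  set σ : ℝ := δ₁ / 2 with hσ_def
  have hσpos : 0 < σ := by positivity
  have hσhalf : σ ≤ 1/2 := by rw [hσ_def]; linarith
  -- the mollified approximation
  set φ : ContDiffBump (0 : Eu d) := ⟨δ₁/2, δ₁, by positivity, by linarith⟩ with hφ_def
  set S : Eu d → Eu d :=
    convolution (φ.normed volume) F (ContinuousLinearMap.lsmul ℝ ℝ) volume with hS_def
  have hSsm : ContDiff ℝ 1 S := by
    have h := HasCompactSupport.contDiff_convolution_left
      (ContinuousLinearMap.lsmul ℝ ℝ) (n := (1:ℕ∞)) φ.hasCompactSupport_normed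
      (φ.contDiff_normed (μ := volume)) (hF.locallyIntegrable (μ := volume))
    exact_mod_cast h
  have hSF : ∀ x ∈ closedBall (0:Eu d) 2, dist (S x) (F x) ≤ 1/4 := by
    intro x hx
    refine ContDiffBump.dist_normed_convolution_le hF.aestronglyMeasurable ?_
    intro y hy
    have hyb : y ∈ closedBall (0:Eu d) 3 := by
      rw [mem_closedBall] at hx ⊢
      rw [mem_ball] at hy
      have hout : φ.rOut = δ₁ := rfl
      calc dist y 0 ≤ dist y x + dist x 0 := dist_triangle _ _ _
        _ ≤ δ₁ + 2 := by
            rw [hout] at hy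
            exact add_le_add (le_of_lt hy) hx
        _ ≤ 3 := by linarith
    have hxb : x ∈ closedBall (0:Eu d) 3 :=
      closedBall_subset_closedBall (by norm_num) hx
    refine le_of_lt (hδuc' y hyb x hxb ?_)
    have hout : φ.rOut = δ₁ := rfl
    rw [mem_ball, hout] at hy
    exact hy
  -- blend with the radial retraction near the unit sphere
  set ψ : ℝ → ℝ := fun s => Real.smoothTransition ((s - (1 - σ))/σ) with hψ_def
  have hψ0 : ∀ s : ℝ, s ≤ 1 - σ → ψ s = 0 := by
    intro s hs
    exact Real.smoothTransition.zero_of_nonpos (div_nonpos_of_nonpos_of_nonneg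
      (by linarith) (le_of_lt hσpos))
  have hψ1 : ψ 1 = 1 := by
    have h1 : ((1:ℝ) - (1 - σ))/σ = 1 := by field_simp; ring
    rw [hψ_def]
    show Real.smoothTransition ((1 - (1 - σ))/σ) = 1
    rw [h1]
    exact Real.smoothTransition.one_of_one_le le_rfl
  have hψmem : ∀ s, ψ s ∈ Set.Icc (0:ℝ) 1 :=
    fun s => ⟨Real.smoothTransition.nonneg _, Real.smoothTransition.le_one _⟩
  set b : Eu d → Eu d := fun x => S x + ψ ‖x‖ • (‖x‖⁻¹ • x - S x) with hb_def
  set W : Set (Eu d) := ball (0 : Eu d) (1 + σ) with hW_def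
  have hWo : IsOpen W := isOpen_ball
  have hnormW : ∀ x ∈ W, ‖x‖ < 1 + σ := by
    intro x hx
    rwa [hW_def, mem_ball, dist_eq_norm, sub_zero] at hx
  -- close to F in the transition region
  have hbF : ∀ x : Eu d, 1 - σ < ‖x‖ → ‖x‖ ≤ 1 + σ → ‖b x - F x‖ ≤ 1/4 := by
    intro x h1 h2
    have hxpos : (0:ℝ) < ‖x‖ := by linarith
    have hxne : x ≠ 0 := norm_pos_iff.1 hxpos
    set w : Eu d := ‖x‖⁻¹ • x with hw_def
    have hwn : ‖w‖ = 1 := by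
      rw [hw_def, norm_smul, norm_inv, norm_norm, inv_mul_cancel₀ (ne_of_gt hxpos)]
    have hFw : F w = w := hid w hwn
    have hwx : dist w x ≤ σ := by
      rw [dist_eq_norm, hw_def]
      have : ‖x‖⁻¹ • x - x = (‖x‖⁻¹ - 1) • x := by
        rw [sub_smul, one_smul]
      rw [this, norm_smul, Real.norm_eq_abs]
      rw [show |‖x‖⁻¹ - 1| * ‖x‖ = |(‖x‖⁻¹ - 1) * ‖x‖| by
        rw [abs_mul, abs_of_nonneg (norm_nonneg x)]]
      rw [show (‖x‖⁻¹ - 1) * ‖x‖ = 1 - ‖x‖ by field_simp]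
      rw [abs_sub_comm, abs_le]
      constructor <;> linarith
    have hxb3 : x ∈ closedBall (0:Eu d) 3 := by
      rw [mem_closedBall, dist_eq_norm, sub_zero]; linarith
    have hwb3 : w ∈ closedBall (0:Eu d) 3 := by
      rw [mem_closedBall, dist_eq_norm, sub_zero, hwn]; norm_num
    have hwF : ‖w - F x‖ ≤ 1/4 := by
      have := hδuc' w hwb3 x hxb3 (lt_of_le_of_lt hwx (by rw [hσ_def]; linarith))
      rw [hFw] at this
      rw [← dist_eq_norm]
      exact le_of_lt this
    have hSFx : ‖S x - F x‖ ≤ 1/4 := by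
      rw [← dist_eq_norm]
      exact hSF x (by rw [mem_closedBall, dist_eq_norm, sub_zero]; linarith)
    have hsplit : b x - F x = (1 - ψ ‖x‖) • (S x - F x) + ψ ‖x‖ • (w - F x) := by
      rw [hb_def, hw_def]
      module
    rw [hsplit]
    have h01 := hψmem ‖x‖
    calc ‖(1 - ψ ‖x‖) • (S x - F x) + ψ ‖x‖ • (w - F x)‖
        ≤ ‖(1 - ψ ‖x‖) • (S x - F x)‖ + ‖ψ ‖x‖ • (w - F x)‖ := norm_add_le _ _
      _ = (1 - ψ ‖x‖) * ‖S x - F x‖ + ψ ‖x‖ * ‖w - F x‖ := by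
          rw [norm_smul, norm_smul, Real.norm_eq_abs, Real.norm_eq_abs,
            abs_of_nonneg (by linarith [h01.2]), abs_of_nonneg h01.1]
      _ ≤ (1 - ψ ‖x‖) * (1/4) + ψ ‖x‖ * (1/4) := by
          have h1' : 0 ≤ 1 - ψ ‖x‖ := by linarith [h01.2]
          exact add_le_add (mul_le_mul_of_nonneg_left hSFx h1')
            (mul_le_mul_of_nonneg_left hwF h01.1)
      _ = 1/4 := by ring
  have hbne : ∀ x ∈ W, b x ≠ 0 := by
    intro x hx
    rcases le_or_gt ‖x‖ (1 - σ) with hc | hc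
    · have hb_eq : b x = S x := by
        rw [hb_def]
        simp [hψ0 _ hc]
      rw [hb_eq]
      have hx2 : x ∈ closedBall (0:Eu d) 2 := by
        rw [mem_closedBall, dist_eq_norm, sub_zero]; linarith
      have := hSF x hx2
      rw [dist_eq_norm] at this
      intro h0
      rw [h0, zero_sub, norm_neg, hsph x] at this
      linarith
    · have hbF' := hbF x hc (le_of_lt (hnormW x hx))
      intro h0
      rw [h0, zero_sub, norm_neg, hsph x] at hbF'
      linarith
  -- b is C¹ on W
  have hψc : ContDiff ℝ 1 Real.smoothTransition := by
    exact_mod_cast Real.smoothTransition.contDiff (n := (1:ℕ∞))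
  have hbsm : ContDiffOn ℝ 1 b W := by
    intro x hx
    rcases lt_or_ge ‖x‖ (1 - σ) with hc | hc
    · -- near the center, b = S
      have hmem : {y : Eu d | ‖y‖ < 1 - σ} ∈ nhds x := by
        have : IsOpen {y : Eu d | ‖y‖ < 1 - σ} := by
          have : {y : Eu d | ‖y‖ < 1 - σ} = ball (0:Eu d) (1 - σ) := by
            ext y; simp [mem_ball, dist_eq_norm]
          rw [this]; exact isOpen_ball
        exact this.mem_nhds hc
      have heq : b =ᶠ[nhds x] S := by
        filter_upwards [hmem] with y hy
        rw [hb_def]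
        simp [hψ0 _ (le_of_lt hy)]
      exact (hSsm.contDiffAt.congr_of_eventuallyEq heq).contDiffWithinAt
    · -- away from the origin, everything is smooth
      have hxne : x ≠ 0 := by
        intro h
        rw [h] at hc
        simp at hc
        linarith
      have n1 : ContDiffAt ℝ 1 (fun y : Eu d => ‖y‖) x := contDiffAt_norm ℝ hxne
      have hψa : ContDiffAt ℝ 1 (fun y : Eu d => ψ ‖y‖) x := by
        have harg : ContDiffAt ℝ 1 (fun y : Eu d => (‖y‖ - (1 - σ))/σ) x :=
          (n1.sub contDiffAt_const).div_const σ
        exact (hψc.contDiffAt).comp x harg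
      have hwa : ContDiffAt ℝ 1 (fun y : Eu d => ‖y‖⁻¹ • y) x :=
        ContDiffAt.smul (n1.inv (norm_ne_zero_iff.2 hxne)) contDiffAt_id
      have hSa : ContDiffAt ℝ 1 S x := hSsm.contDiffAt
      exact (hSa.add (hψa.smul (hwa.sub hSa))).contDiffWithinAt
  -- normalize
  set r : Eu d → Eu d := fun x => ‖b x‖⁻¹ • b x with hr_def
  have hrsm : ContDiffOn ℝ 1 r W := by
    intro x hx
    have hbx : ContDiffAt ℝ 1 b x := (hbsm x hx).contDiffAt (hWo.mem_nhds hx)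
    have hnorm : ContDiffAt ℝ 1 (fun y => ‖b y‖) x := hbx.norm ℝ (hbne x hx)
    exact ((hnorm.inv (norm_ne_zero_iff.2 (hbne x hx))).smul hbx).contDiffWithinAt
  have hrsph : ∀ x ∈ W, ‖r x‖ = 1 := by
    intro x hx
    show ‖‖b x‖⁻¹ • b x‖ = 1
    simp only [norm_smul, norm_inv, norm_norm]
    exact inv_mul_cancel₀ (norm_ne_zero_iff.2 (hbne x hx))
  have hrid : ∀ x : Eu d, ‖x‖ = 1 → r x = x := by
    intro x hxn
    have hb_eq : b x = x := by
      show S x + ψ ‖x‖ • (‖x‖⁻¹ • x - S x) = x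
      rw [hxn, hψ1, inv_one, one_smul, one_smul]
      abel
    show ‖b x‖⁻¹ • b x = x
    rw [hb_eq, hxn, inv_one, one_smul]
  have hball : closedBall (0:Eu d) 1 ⊆ W :=
    closedBall_subset_ball (by linarith)
  exact no_smooth_retraction W hWo hball r hrsm hrsph hrid

/-- The identity is an essential map: any continuous map on the closure of a
bounded open set agreeing with the identity on the frontier attains every value
of the open set. -/
theorem id_essential {d : ℕ} (Ω : Set (Eu d)) (hΩo : IsOpen Ω)
    (hΩb : Bornology.IsBounded Ω) (y : Eu d) (hy : y ∈ Ω) (g : Eu d → Eu d)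
    (hg : ContinuousOn g (closure Ω)) (hgb : ∀ x ∈ frontier Ω, g x = x) :
    ∃ x ∈ closure Ω, g x = y := by
  classical
  by_contra hcon
  push_neg at hcon
  set gt : Eu d → Eu d := (closure Ω).piecewise g id with hgt_def
  have hgt : Continuous gt := by
    refine continuous_piecewise (fun a ha => ?_) (by rwa [closure_closure]) ?_
    · exact hgb a (frontier_closure_subset ha)
    · exact continuous_id.continuousOn
  have hgtne : ∀ x, gt x ≠ y := by
    intro x
    by_cases hx : x ∈ closure Ω
    · simpa [hgt_def, Set.piecewise_eq_of_mem _ _ _ hx] using hcon x hx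
    · have : gt x = x := Set.piecewise_eq_of_notMem _ _ _ hx
      rw [this]
      intro h
      exact hx (h ▸ subset_closure hy)
  obtain ⟨ρ₀, hρ₀⟩ := (Metric.isBounded_iff_subset_ball y).1 hΩb.closure
  set ρ : ℝ := max ρ₀ 1 with hρ_def
  have hρpos : (0:ℝ) < ρ := lt_of_lt_of_le one_pos (le_max_right _ _)
  have hsub : closure Ω ⊆ ball y ρ :=
    hρ₀.trans (Metric.ball_subset_ball (le_max_left _ _))
  set w : Eu d → Eu d := fun u => gt (y + ρ • u) - y with hw_def
  have hwc : Continuous w :=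
    (hgt.comp (continuous_const.add (continuous_const_smul ρ))).sub continuous_const
  have hwne : ∀ u, w u ≠ 0 := fun u => sub_ne_zero.2 (hgtne _)
  set R1 : Eu d → Eu d := fun u => ‖w u‖⁻¹ • w u with hR1_def
  have hR1c : Continuous R1 := (hwc.norm.inv₀ fun u => norm_ne_zero_iff.2 (hwne u)).smul hwc
  have hR1s : ∀ u, ‖R1 u‖ = 1 := by
    intro u
    rw [hR1_def]
    simp only [norm_smul, norm_inv, norm_norm]
    exact inv_mul_cancel₀ (norm_ne_zero_iff.2 (hwne u))
  have hR1id : ∀ u : Eu d, ‖u‖ = 1 → R1 u = u := by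
    intro u hu
    have hout : y + ρ • u ∉ closure Ω := by
      intro hmem
      have := hsub hmem
      rw [mem_ball, dist_eq_norm] at this
      simp [norm_smul, hu, abs_of_pos hρpos] at this
    have hgteq : gt (y + ρ • u) = y + ρ • u := Set.piecewise_eq_of_notMem _ _ _ hout
    have hwu : w u = ρ • u := by rw [hw_def]; simp [hgteq]
    rw [hR1_def]
    simp only [hwu, norm_smul, hu, Real.norm_eq_abs, abs_of_pos hρpos, mul_one, smul_smul]
    rw [inv_mul_cancel₀ (ne_of_gt hρpos), one_smul]
  exact no_cont_retraction R1 hR1c hR1s hR1id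

/-- Homotopy continuation (Granas): if `H` is a homotopy starting from the
identity, and a moving target point `y θ` never crosses `H θ '' (frontier Ω)`,
and starts inside `Ω`, then the final target is attained by `H 1` on `closure Ω`. -/
theorem homotopy_essential {d : ℕ} (Ω : Set (Eu d)) (hΩo : IsOpen Ω)
    (hΩb : Bornology.IsBounded Ω) (H : ℝ → Eu d → Eu d)
    (hHc : ContinuousOn (fun p : ℝ × Eu d => H p.1 p.2)
      (Set.Icc 0 1 ×ˢ closure Ω))
    (hH0 : ∀ x ∈ closure Ω, H 0 x = x)
    (y : ℝ → Eu d) (hyc : ContinuousOn y (Set.Icc 0 1))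
    (hbd : ∀ θ ∈ Set.Icc (0:ℝ) 1, ∀ x ∈ frontier Ω, H θ x ≠ y θ)
    (hy0 : y 0 ∈ Ω) : ∃ x ∈ closure Ω, H 1 x = y 1 := by
  classical
  by_contra hcon
  push_neg at hcon
  set S : Set (ℝ × Eu d) := Set.Icc 0 1 ×ˢ closure Ω with hS_def
  have hclcpt : IsCompact (closure Ω) := hΩb.isCompact_closure
  have hScpt : IsCompact S := isCompact_Icc.prod hclcpt
  set G : ℝ × Eu d → Eu d := fun p => H p.1 p.2 - y p.1 + y 0 with hG_def
  have hGc : ContinuousOn G S := by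
    refine (hHc.sub ?_).add continuousOn_const
    exact hyc.comp continuousOn_fst (fun p hp => hp.1)
  set B' : Set (ℝ × Eu d) := S ∩ G ⁻¹' {y 0} with hB'_def
  have hB'closed : IsClosed B' :=
    hGc.preimage_isClosed_of_isClosed hScpt.isClosed isClosed_singleton
  have hB'cpt : IsCompact B' := hScpt.of_isClosed_subset hB'closed Set.inter_subset_left
  set A : Set (Eu d) := Prod.snd '' B' with hA_def
  have hAcpt : IsCompact A := hB'cpt.image continuous_snd
  have hAfr : ∀ x ∈ A, x ∉ frontier Ω := by
    rintro x ⟨p, ⟨hpS, hpG⟩, rfl⟩ hxfr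
    have hGp : G p = y 0 := hpG
    have : H p.1 p.2 = y p.1 := by
      have h := hGp
      rw [hG_def] at h
      have h0 : H p.1 p.2 - y p.1 = 0 := add_eq_right.1 h
      exact sub_eq_zero.1 h0
    exact hbd p.1 hpS.1 p.2 hxfr this
  have hAy : y 0 ∈ A := by
    refine ⟨(0, y 0), ⟨⟨⟨le_refl _, zero_le_one⟩, subset_closure hy0⟩, ?_⟩, rfl⟩
    simp only [Set.mem_preimage, Set.mem_singleton_iff, hG_def]
    simp [hH0 (y 0) (subset_closure hy0)]
  by_cases hfr : frontier Ω = ∅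
  · -- Ω is clopen, hence univ, hence the space is trivial
    have hclopen : IsClopen Ω := isClopen_iff_frontier_eq_empty.2 hfr
    have huniv : Ω = Set.univ := hclopen.eq_univ ⟨y 0, hy0⟩
    have hsub : ∀ z : Eu d, z = 0 := by
      intro z
      by_contra hz
      obtain ⟨ρ, hρ⟩ := (Metric.isBounded_iff_subset_ball 0).1 (huniv ▸ hΩb)
      have h0 : (0 : Eu d) ∈ ball (0 : Eu d) ρ := hρ (Set.mem_univ _)
      have hρpos : 0 < ρ := by simpa using h0
      have hmem : ((ρ + 1) / ‖z‖) • z ∈ ball (0 : Eu d) ρ := hρ (Set.mem_univ _)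
      rw [mem_ball, dist_eq_norm, sub_zero, norm_smul] at hmem
      have hznorm : 0 < ‖z‖ := norm_pos_iff.2 hz
      rw [Real.norm_eq_abs, abs_of_pos (by positivity), div_mul_cancel₀ _ (ne_of_gt hznorm)] at hmem
      linarith
    have : H 1 (y 1) = y 1 := by rw [hsub (H 1 (y 1)), hsub (y 1)]
    exact hcon (y 1) (by rw [huniv, closure_univ]; trivial) this
  · have hfrne : (frontier Ω).Nonempty := Set.nonempty_iff_ne_empty.2 hfr
    have hAne : A.Nonempty := ⟨y 0, hAy⟩
    set lam : Eu d → ℝ :=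
      fun x => infDist x (frontier Ω) / (infDist x (frontier Ω) + infDist x A) with hlam_def
    have hdenpos : ∀ x, 0 < infDist x (frontier Ω) + infDist x A := by
      intro x
      rcases lt_or_eq_of_le (add_nonneg (infDist_nonneg (s := frontier Ω) (x := x))
        (infDist_nonneg (s := A) (x := x))) with h | h
      · exact h
      exfalso
      have h1 : infDist x (frontier Ω) = 0 := by
        have := infDist_nonneg (s := frontier Ω) (x := x)
        have := infDist_nonneg (s := A) (x := x)
        linarith
      have h2 : infDist x A = 0 := by
        have := infDist_nonneg (s := frontier Ω) (x := x)
        have := infDist_nonneg (s := A) (x := x)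
        linarith
      have hx1 : x ∈ frontier Ω := (IsClosed.mem_iff_infDist_zero isClosed_frontier hfrne).2 h1
      have hx2 : x ∈ A := (IsClosed.mem_iff_infDist_zero hAcpt.isClosed hAne).2 h2
      exact hAfr x hx2 hx1
    have hlamc : Continuous lam :=
      (continuous_infDist_pt _).div ((continuous_infDist_pt _).add (continuous_infDist_pt _))
        fun x => ne_of_gt (hdenpos x)
    have hlam01 : ∀ x, lam x ∈ Set.Icc (0:ℝ) 1 := by
      intro x
      constructor
      · exact div_nonneg infDist_nonneg (le_of_lt (hdenpos x))
      · rw [div_le_one (hdenpos x)]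
        have := infDist_nonneg (s := A) (x := x)
        linarith
    have hlamfr : ∀ x ∈ frontier Ω, lam x = 0 := by
      intro x hx
      rw [hlam_def]
      simp [infDist_zero_of_mem hx]
    have hlamA : ∀ x ∈ A, lam x = 1 := by
      intro x hx
      have h2 : infDist x A = 0 := infDist_zero_of_mem hx
      rw [hlam_def]
      simp only [h2, add_zero]
      refine div_self (fun h0 => ?_)
      have := hdenpos x
      rw [h0, h2] at this
      simp at this
    set g : Eu d → Eu d := fun x => G (lam x, x) with hg_def
    have hgc : ContinuousOn g (closure Ω) := by
      refine hGc.comp ((hlamc.prodMk continuous_id).continuousOn) ?_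
      intro x hx
      exact ⟨hlam01 x, hx⟩
    have hgb : ∀ x ∈ frontier Ω, g x = x := by
      intro x hx
      have hxcl : x ∈ closure Ω := frontier_subset_closure hx
      rw [hg_def]
      simp only [hlamfr x hx]
      show G (0, x) = x
      rw [hG_def]
      simp [hH0 x hxcl]
    obtain ⟨x, hx, hgx⟩ := id_essential Ω hΩo hΩb (y 0) hy0 g hgc hgb
    have hxA : x ∈ A := ⟨(lam x, x), ⟨⟨hlam01 x, hx⟩, hgx⟩, rfl⟩
    have hlx : lam x = 1 := hlamA x hxA
    rw [hg_def] at hgx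
    simp only [hlx] at hgx
    have : H 1 x = y 1 := by
      have h : H (1:ℝ) x - y 1 + y 0 = y 0 := hgx
      have h0 : H (1:ℝ) x - y 1 = 0 := add_eq_right.1 h
      exact sub_eq_zero.1 h0
    exact hcon x hx this

/-- `K` separates `A` from `B`: every continuous path from a point of `A`
to a point of `B` intersects `K`. -/
def Separates (K A B : Set (EuclideanSpace ℝ (Fin d))) : Prop :=
  ∀ f : ℝ → EuclideanSpace ℝ (Fin d), ContinuousOn f (Set.Icc 0 1) →
    f 0 ∈ A → f 1 ∈ B → ∃ s ∈ Set.Icc (0:ℝ) 1, f s ∈ K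

/-- Set separation by spheres is preserved by a continuous deformation
`X : [0,T] × ℝ^d → ℝ^d` with `X₀ = id` and preimages of small balls around the
origin small: if the closed set `K ⊆ B(0, r_b)` separates `r_a S^{d-1}` from
`r_b S^{d-1}`, then each `X_t(K)` is contained in some ball `B(0, r'_b)` and
separates `r'_a S^{d-1}` from `r'_b S^{d-1}` for some `0 < r'_a < r'_b`. -/
theorem set_separation_spheres
    (T : ℝ) (hT : 0 ≤ T)
    (X : ℝ → EuclideanSpace ℝ (Fin d) → EuclideanSpace ℝ (Fin d))
    (hXcont : Continuous fun p : ℝ × EuclideanSpace ℝ (Fin d) => X p.1 p.2)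
    (hX0 : X 0 = id)
    (hXinv : ∀ ε > (0:ℝ), ∃ η > (0:ℝ), ∀ t ∈ Set.Icc 0 T, ∀ u₀,
      ‖X t u₀‖ < η → ‖u₀‖ < ε)
    (ra rb : ℝ) (hra : 0 < ra) (hrab : ra < rb)
    (K : Set (EuclideanSpace ℝ (Fin d))) (hKclosed : IsClosed K)
    (hKball : K ⊆ Metric.ball (0 : EuclideanSpace ℝ (Fin d)) rb)
    (hKsep : Separates K (Metric.sphere (0 : EuclideanSpace ℝ (Fin d)) ra)
      (Metric.sphere (0 : EuclideanSpace ℝ (Fin d)) rb)) :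
    ∀ t ∈ Set.Icc 0 T, ∃ ra' rb' : ℝ, 0 < ra' ∧ ra' < rb' ∧
      X t '' K ⊆ Metric.ball (0 : EuclideanSpace ℝ (Fin d)) rb' ∧
      Separates (X t '' K)
        (Metric.sphere (0 : EuclideanSpace ℝ (Fin d)) ra')
        (Metric.sphere (0 : EuclideanSpace ℝ (Fin d)) rb') := by
  intro t ht
  obtain ⟨η, hη, hXi⟩ := hXinv ra hra
  obtain ⟨M, hM⟩ := (isCompact_Icc.prod
    (isCompact_closedBall (0 : Eu d) rb)).exists_bound_of_continuousOn
    hXcont.continuousOn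
  have hMrb : ∀ s ∈ Set.Icc 0 T, ∀ x ∈ closedBall (0 : Eu d) rb, ‖X s x‖ ≤ M :=
    fun s hs x hx => hM (s, x) ⟨hs, hx⟩
  set ra' : ℝ := min η ra / 2 with hra'_def
  set rb' : ℝ := max M ra + 1 with hrb'_def
  have hra'pos : 0 < ra' := by
    rw [hra'_def]; positivity
  have hra'ra : ra' < ra := by
    rw [hra'_def]
    have : min η ra ≤ ra := min_le_right _ _
    linarith
  have hra'η : ra' < η := by
    rw [hra'_def]
    have : min η ra ≤ η := min_le_left _ _
    linarith
  have hrb'ra : ra < rb' := by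
    rw [hrb'_def]
    have : ra ≤ max M ra := le_max_right _ _
    linarith
  have hMrb' : M < rb' := by
    rw [hrb'_def]
    have : M ≤ max M ra := le_max_left _ _
    linarith
  have himg : X t '' K ⊆ ball (0 : Eu d) rb' := by
    rintro _ ⟨x, hx, rfl⟩
    have hxb : x ∈ closedBall (0 : Eu d) rb := ball_subset_closedBall (hKball hx)
    have := hMrb t ht x hxb
    rw [mem_ball, dist_eq_norm, sub_zero]
    linarith
  refine ⟨ra', rb', hra'pos, lt_trans hra'ra hrb'ra, himg, ?_⟩
  intro γ hγc hγ0 hγ1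
  by_contra hcon
  push_neg at hcon
  have hγ0n : ‖γ 0‖ = ra' := by
    have := hγ0; rwa [mem_sphere_zero_iff_norm] at this
  have hγ1n : ‖γ 1‖ = rb' := by
    have := hγ1; rwa [mem_sphere_zero_iff_norm] at this
  -- The set of points joined to the sphere of radius rb avoiding K
  set V : Set (Eu d) := {z | ∃ wp : Eu d, ‖wp‖ = rb ∧ JoinedIn Kᶜ z wp} with hV_def
  set Ω : Set (Eu d) := (closure V)ᶜ with hΩ_def
  have hΩo : IsOpen Ω := isClosed_closure.isOpen_compl
  -- every point of norm ≥ rb is in V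
  have hVout : ∀ z : Eu d, rb ≤ ‖z‖ → z ∈ V := by
    intro z hz
    have hzpos : (0:ℝ) < ‖z‖ := lt_of_lt_of_le (lt_trans hra hrab) hz
    have hzne : z ≠ 0 := norm_pos_iff.1 hzpos
    set wp : Eu d := (rb / ‖z‖) • z with hwp_def
    have hwpn : ‖wp‖ = rb := by
      rw [hwp_def, norm_smul, Real.norm_eq_abs,
        abs_of_pos (div_pos (lt_trans hra hrab) hzpos), div_mul_cancel₀]
      exact ne_of_gt hzpos
    have hseg : segment ℝ z wp ⊆ Kᶜ := by
      intro p hp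
      rw [segment_eq_image] at hp
      obtain ⟨θ, hθ, rfl⟩ := hp
      show ((1:ℝ) - θ) • z + θ • wp ∈ Kᶜ
      have hcoef : (1 - θ) • z + θ • wp = ((1 - θ) + θ * (rb / ‖z‖)) • z := by
        rw [hwp_def, smul_smul, add_smul]
      rw [hcoef]
      intro hK
      have := hKball hK
      rw [mem_ball, dist_eq_norm, sub_zero, norm_smul, Real.norm_eq_abs] at this
      have hc1 : 0 ≤ 1 - θ := by linarith [hθ.2]
      have hc2 : 0 ≤ θ * (rb / ‖z‖) :=
        mul_nonneg hθ.1 (le_of_lt (div_pos (lt_trans hra hrab) hzpos))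
      rw [abs_of_nonneg (by linarith)] at this
      have hexp : ((1 - θ) + θ * (rb / ‖z‖)) * ‖z‖ = (1 - θ) * ‖z‖ + θ * rb := by
        field_simp
      rw [hexp] at this
      nlinarith [hθ.1, hθ.2]
    have hjs : JoinedIn (segment ℝ z wp) z wp :=
      ((convex_segment z wp).isPathConnected ⟨z, left_mem_segment ℝ z wp⟩).joinedIn
        z (left_mem_segment ℝ z wp) wp (right_mem_segment ℝ z wp)
    exact ⟨wp, hwpn, hjs.mono hseg⟩
  -- no point of V has norm ≤ ra
  have hVa : ∀ z ∈ V, ¬ (‖z‖ ≤ ra) := by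
    rintro z ⟨wp, hwpn, hj⟩ hza
    obtain ⟨γp, hγp⟩ := hj
    set f : ℝ → Eu d := fun u => γp (Set.projIcc 0 1 zero_le_one u) with hf_def
    have hfc : Continuous f := γp.continuous.comp continuous_projIcc
    have hf0 : f 0 = z := by
      rw [hf_def]
      simp only [Set.projIcc_left]
      exact γp.source
    have hf1 : f 1 = wp := by
      rw [hf_def]
      simp only [Set.projIcc_right]
      exact γp.target
    have hfK : ∀ u, f u ∉ K := fun u => hγp _
    have hIVT := intermediate_value_Icc (zero_le_one (α := ℝ)) (hfc.norm.continuousOn)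
    have hmem : ra ∈ Set.Icc ‖f 0‖ ‖f 1‖ := by
      rw [hf0, hf1, hwpn]
      exact ⟨hza, le_of_lt hrab⟩
    obtain ⟨s₀, hs₀, hfs₀⟩ := hIVT hmem
    set g : ℝ → Eu d := fun u => f (s₀ + u * (1 - s₀)) with hg_def
    have hgc : Continuous g :=
      hfc.comp (continuous_const.add (continuous_id.mul continuous_const))
    have hg0 : g 0 ∈ sphere (0 : Eu d) ra := by
      rw [mem_sphere_zero_iff_norm, hg_def]
      simpa using hfs₀
    have hg1 : g 1 ∈ sphere (0 : Eu d) rb := by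
      rw [mem_sphere_zero_iff_norm, hg_def]
      have h1 : s₀ + 1 * (1 - s₀) = 1 := by ring
      simp only [h1]
      rw [hf1, hwpn]
    obtain ⟨u, _, huK⟩ := hKsep g hgc.continuousOn hg0 hg1
    exact hfK _ huK
  -- V is open
  have hVopen : IsOpen V := by
    rw [Metric.isOpen_iff]
    rintro z ⟨wp, hwpn, hj⟩
    have hzK : z ∈ Kᶜ := hj.source_mem
    obtain ⟨δ, hδ, hδsub⟩ := Metric.isOpen_iff.1 hKclosed.isOpen_compl z hzK
    refine ⟨δ, hδ, ?_⟩
    intro z' hz'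
    have hjb : JoinedIn (ball z δ) z' z :=
      ((convex_ball z δ).isPathConnected ⟨z, mem_ball_self hδ⟩).joinedIn
        z' hz' z (mem_ball_self hδ)
    exact ⟨wp, hwpn, (hjb.mono hδsub).trans hj⟩
  -- ball of radius ra is in Ω
  have hballΩ : ball (0 : Eu d) ra ⊆ Ω := by
    intro x hx
    rw [hΩ_def]
    intro hxcl
    obtain ⟨z, hzb, hzV⟩ := mem_closure_iff.1 hxcl (ball 0 ra) isOpen_ball hx
    exact hVa z hzV (le_of_lt (by rwa [mem_ball, dist_eq_norm, sub_zero] at hzb))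
  -- frontier of Ω is in K
  have hfrK : frontier Ω ⊆ K := by
    intro x hx
    rw [hΩ_def, frontier_compl] at hx
    have hx1 : x ∈ closure V := by
      have h := hx.1
      rwa [closure_closure] at h
    have hx2 : x ∉ V := fun hV => hx.2 (interior_maximal subset_closure hVopen hV)
    by_contra hxK
    obtain ⟨δ, hδ, hδsub⟩ := Metric.isOpen_iff.1 hKclosed.isOpen_compl x hxK
    obtain ⟨z, hzb, hzV⟩ := mem_closure_iff.1 hx1 (ball x δ) isOpen_ball (mem_ball_self hδ)
    obtain ⟨wp, hwpn, hj⟩ := hzV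
    have hjb : JoinedIn (ball x δ) x z :=
      ((convex_ball x δ).isPathConnected ⟨x, mem_ball_self hδ⟩).joinedIn
        x (mem_ball_self hδ) z hzb
    exact hx2 ⟨wp, hwpn, (hjb.mono hδsub).trans hj⟩
  -- Ω is bounded
  have hΩsub : Ω ⊆ ball (0 : Eu d) rb := by
    intro z hz
    rw [mem_ball, dist_eq_norm, sub_zero]
    by_contra h
    push_neg at h
    exact hz (subset_closure (hVout z h))
  have hΩb : Bornology.IsBounded Ω := (Metric.isBounded_ball).subset hΩsub
  have hclΩ : closure Ω ⊆ closedBall (0 : Eu d) rb :=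
    (closure_mono hΩsub).trans closure_ball_subset_closedBall
  have hfrnorm : ∀ x ∈ frontier Ω, ra ≤ ‖x‖ := by
    intro x hx
    have hnΩ : x ∉ Ω := by
      intro hmem
      rw [frontier, hΩo.interior_eq] at hx
      exact hx.2 hmem
    by_contra h
    push_neg at h
    exact hnΩ (hballΩ (by rwa [mem_ball, dist_eq_norm, sub_zero]))
  -- the homotopy and the moving target
  set H : ℝ → Eu d → Eu d := fun θ x => X (t * min (2 * θ) 1) x with hH_def
  set yy : ℝ → Eu d := fun θ => γ (max 0 (2 * θ - 1)) with hyy_def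
  have hHc : ContinuousOn (fun p : ℝ × Eu d => H p.1 p.2)
      (Set.Icc 0 1 ×ˢ closure Ω) := by
    apply Continuous.continuousOn
    exact hXcont.comp ((continuous_const.mul
      ((continuous_const.mul continuous_fst).min continuous_const)).prodMk continuous_snd)
  have hH0 : ∀ x ∈ closure Ω, H 0 x = x := by
    intro x _
    rw [hH_def]
    norm_num
    rw [hX0]; rfl
  have hyc : ContinuousOn yy (Set.Icc 0 1) := by
    refine hγc.comp (continuous_const.max
      ((continuous_const.mul continuous_id).sub continuous_const)).continuousOn ?_
    intro θ hθ
    constructor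
    · exact le_max_left _ _
    · refine max_le zero_le_one (by linarith [hθ.2])
  have hy0 : yy 0 ∈ Ω := by
    have h0 : max (0:ℝ) (2 * 0 - 1) = 0 := by norm_num
    rw [hyy_def]
    simp only [h0]
    exact hballΩ (by rw [mem_ball, dist_eq_norm, sub_zero, hγ0n]; exact hra'ra)
  have hbd : ∀ θ ∈ Set.Icc (0:ℝ) 1, ∀ x ∈ frontier Ω, H θ x ≠ yy θ := by
    intro θ hθ x hx
    have hxK := hfrK hx
    have hxra := hfrnorm x hx
    set s : ℝ := t * min (2 * θ) 1 with hs_def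
    have hs : s ∈ Set.Icc 0 T := by
      constructor
      · exact mul_nonneg ht.1 (le_min (by linarith [hθ.1]) zero_le_one)
      · calc s ≤ t * 1 := mul_le_mul_of_nonneg_left (min_le_right _ _) ht.1
          _ = t := mul_one t
          _ ≤ T := ht.2
    have hnorm : η ≤ ‖X s x‖ := by
      by_contra hlt
      push_neg at hlt
      exact absurd (hXi s hs x hlt) (not_lt.2 hxra)
    rcases le_or_gt θ (1/2) with hhalf | hhalf
    · have hmax : max (0:ℝ) (2 * θ - 1) = 0 := max_eq_left (by linarith)
      rw [hH_def, hyy_def]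
      simp only [hmax]
      intro heq
      have : ‖X s x‖ = ra' := by rw [← hγ0n, heq]
      linarith
    · have hmin : min (2 * θ) (1:ℝ) = 1 := min_eq_right (by linarith)
      have hsx : H θ x = X t x := by rw [hH_def]; simp only [hmin, mul_one]
      have harg : max 0 (2 * θ - 1) ∈ Set.Icc (0:ℝ) 1 :=
        ⟨le_max_left _ _, max_le zero_le_one (by linarith [hθ.2])⟩
      intro heq
      exact hcon _ harg ⟨x, hxK, by rw [← hsx, heq]⟩
  obtain ⟨x, hxcl, hx1⟩ := homotopy_essential Ω hΩo hΩb H hHc hH0 yy hyc hbd hy0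
  have hH1 : H 1 x = X t x := by
    rw [hH_def]
    norm_num
  have hyy1 : yy 1 = γ 1 := by
    rw [hyy_def]
    norm_num
  have hXtx : X t x = γ 1 := by rw [← hH1, ← hyy1]; exact hx1
  have hb1 : ‖X t x‖ ≤ M := hMrb t ht x (hclΩ hxcl)
  rw [hXtx, hγ1n] at hb1
  linarith

end
end
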